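/- For all integers n ≥ 1 and 1 ≤ d ≤ n there exists a set of binary words of length 2n, each having 1-bounded running digital sum (1-BRDS), with pairwise Hamming distances at least 2d, whose size is at least 2^n / (∑_{j=0}^{d−1} C(n,j)). -/

import Mathlib

/-- The four-letter DNA alphabet. -/
inductive DNA | A | T | G | C
deriving DecidableEq

/-- Hamming distance between two words (of equal length) given as lists. -/
def hammingD {α : Type*} [DecidableEq α] (x y : List α) : ℕ :=
  (x.zip y).countP (fun p => decide (p.1 ≠ p.2))

/-- A binary word has `D`-bounded running digital sum if in every prefix the
numbers of ones and zeros differ by at most `D`. -/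
def brds (D : ℕ) (w : List Bool) : Prop :=
  ∀ k ≤ w.length,
    (((w.take k).count true : ℤ) - ((w.take k).count false : ℤ)).natAbs ≤ D

/-- The letters `G`, `C` of the DNA alphabet. -/
def isGC : DNA → Bool
  | DNA.G => true
  | DNA.C => true
  | _ => false

/-- A DNA word is `D`-GC-prefix-balanced if in every prefix the number of
letters from {G,C} and the number of letters from {A,T} differ by at most `D`. -/
def gcpb (D : ℕ) (w : List DNA) : Prop :=
  ∀ k ≤ w.length,
    (((w.take k).countP isGC : ℤ) - ((w.take k).countP (fun c => !(isGC c)) : ℤ)).natAbs ≤ D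

/-- A word is self-uncorrelated if no proper nonempty prefix equals the suffix
of the same length. -/
def selfUncorr {α : Type*} (w : List α) : Prop :=
  ∀ k, 1 ≤ k → k ≤ w.length - 1 → w.take k ≠ w.drop (w.length - k)

/-- A set of words is mutually uncorrelated if every word is self-uncorrelated
and for every ordered pair of distinct words `x`, `y` no nonempty prefix of `y`
equals a suffix of `x` of the same length. -/
def mutUncorr {α : Type*} (S : Set (List α)) : Prop :=
  (∀ w ∈ S, selfUncorr w) ∧
  ∀ x ∈ S, ∀ y ∈ S, x ≠ y →
    ∀ k, 1 ≤ k → k ≤ x.length → y.take k ≠ x.drop (x.length - k)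

/-- A Dyck word: equal numbers of ones and zeros, and every prefix has at least
as many ones as zeros. -/
def isDyck (w : List Bool) : Prop :=
  w.count true = w.count false ∧
  ∀ k ≤ w.length, (w.take k).count false ≤ (w.take k).count true

/-- The height of a (Dyck) word is at most `D`: in every prefix the number of
ones exceeds the number of zeros by at most `D`. -/
def heightLe (D : ℕ) (w : List Bool) : Prop :=
  ∀ k ≤ w.length, ((w.take k).count true : ℤ) - ((w.take k).count false : ℤ) ≤ (D : ℤ)


open Finset in
private def hdist {n : ℕ} (x y : Fin n → Bool) : ℕ :=
  (Finset.univ.filter (fun i => x i ≠ y i)).card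

lemma hdist_comm {n : ℕ} (x y : Fin n → Bool) : hdist x y = hdist y x := by
  unfold hdist
  congr 1
  apply Finset.filter_congr
  intro i _
  simp [ne_comm]

lemma hdist_self {n : ℕ} (x : Fin n → Bool) : hdist x x = 0 := by
  simp [hdist]

lemma ball_card {n : ℕ} (d : ℕ) (c : Fin n → Bool) :
    (Finset.univ.filter (fun y => hdist c y < d)).card ≤
      ∑ j ∈ Finset.range d, n.choose j := by
  classical
  have hB : ((Finset.range d).biUnion
      (fun j => Finset.powersetCard j (Finset.univ : Finset (Fin n)))).card
      = ∑ j ∈ Finset.range d, n.choose j := by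
    rw [Finset.card_biUnion]
    · simp [Finset.card_powersetCard]
    · intro i hi j hj hij
      refine Finset.disjoint_left.mpr ?_
      intro s hsi hsj
      rw [Finset.mem_powersetCard] at hsi hsj
      exact hij (hsi.2 ▸ hsj.2 ▸ rfl)
  rw [← hB]
  apply Finset.card_le_card_of_injOn (fun y => Finset.univ.filter (fun i => c i ≠ y i))
  · intro y hy
    simp only [Finset.coe_filter, Finset.mem_coe, Finset.mem_filter, Finset.mem_univ, true_and, Set.mem_setOf_eq] at hy
    refine Finset.mem_biUnion.mpr
      ⟨(Finset.univ.filter (fun i => c i ≠ y i)).card, Finset.mem_range.mpr hy,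
        Finset.mem_powersetCard.mpr ⟨Finset.filter_subset _ _, rfl⟩⟩
  · intro y1 _ y2 _ hs
    funext i
    have h := Finset.ext_iff.mp hs i
    simp only [Finset.mem_filter, Finset.mem_univ, true_and] at h
    revert h
    cases c i <;> cases y1 i <;> cases y2 i <;> simp

lemma gv (n d : ℕ) (hd : 1 ≤ d) :
    ∃ C : Finset (Fin n → Bool),
      (∀ x ∈ C, ∀ y ∈ C, x ≠ y → d ≤ hdist x y) ∧
      2 ^ n ≤ C.card * ∑ j ∈ Finset.range d, n.choose j := by
  classical
  set P : Finset (Fin n → Bool) → Prop :=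
    fun C => ∀ x ∈ C, ∀ y ∈ C, x ≠ y → d ≤ hdist x y with hPdef
  have hne : (Finset.univ.filter P).Nonempty := ⟨∅, by simp [hPdef]⟩
  obtain ⟨C, hCmem, hCmax⟩ := Finset.exists_max_image (Finset.univ.filter P) Finset.card hne
  have hCP : P C := (Finset.mem_filter.mp hCmem).2
  have hcover : ∀ y : Fin n → Bool, ∃ c ∈ C, hdist c y < d := by
    intro y
    by_contra hcon
    push_neg at hcon
    have hyC : y ∉ C := fun hy => by
      have := hcon y hy; rw [hdist_self] at this; omega
    have hP' : P (insert y C) := by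
      intro a ha b hb hab
      rcases Finset.mem_insert.mp ha with ha' | ha'
      · rcases Finset.mem_insert.mp hb with hb' | hb'
        · exact absurd (ha'.trans hb'.symm) hab
        · rw [ha', hdist_comm]; exact hcon b hb'
      · rcases Finset.mem_insert.mp hb with hb' | hb'
        · rw [hb']; exact hcon a ha'
        · exact hCP a ha' b hb' hab
    have := hCmax (insert y C) (Finset.mem_filter.mpr ⟨Finset.mem_univ _, hP'⟩)
    rw [Finset.card_insert_of_notMem hyC] at this
    omega
  have hsub : (Finset.univ : Finset (Fin n → Bool)) ⊆
      C.biUnion (fun c => Finset.univ.filter (fun y => hdist c y < d)) := by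
    intro y _
    obtain ⟨c, hc, hlt⟩ := hcover y
    exact Finset.mem_biUnion.mpr ⟨c, hc, by simp [hlt]⟩
  refine ⟨C, hCP, ?_⟩
  calc 2 ^ n = (Finset.univ : Finset (Fin n → Bool)).card := by
        simp [Finset.card_univ]
    _ ≤ (C.biUnion fun c => Finset.univ.filter (fun y => hdist c y < d)).card :=
        Finset.card_le_card hsub
    _ ≤ ∑ c ∈ C, (Finset.univ.filter (fun y => hdist c y < d)).card :=
        Finset.card_biUnion_le
    _ ≤ ∑ _c ∈ C, ∑ j ∈ Finset.range d, n.choose j :=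
        Finset.sum_le_sum (fun c _ => ball_card d c)
    _ = C.card * ∑ j ∈ Finset.range d, n.choose j := by
        rw [Finset.sum_const, smul_eq_mul]

def enc : List Bool → List Bool
  | [] => []
  | b :: l => b :: (!b) :: enc l

lemma enc_length (l : List Bool) : (enc l).length = 2 * l.length := by
  induction l with
  | nil => rfl
  | cons b t ih => simp only [enc, List.length_cons, ih]; omega

lemma brds_enc : ∀ (l : List Bool) (k : ℕ), k ≤ (enc l).length →
    ((((enc l).take k).count true : ℤ) - (((enc l).take k).count false : ℤ)).natAbs ≤ 1 := by
  intro l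
  induction l with
  | nil =>
    intro k hk
    simp only [enc, List.length_nil, Nat.le_zero] at hk
    subst hk; simp
  | cons b t ih =>
    intro k hk
    match k with
    | 0 => simp
    | 1 => cases b <;> simp [enc]
    | (k + 2) =>
      have hk' : k ≤ (enc t).length := by
        simp only [enc, List.length_cons] at hk; omega
      have htake : (enc (b :: t)).take (k + 2) = b :: (!b) :: (enc t).take k := rfl
      rw [htake]
      have h1 : ((b :: (!b) :: (enc t).take k).count true : ℤ)
          = (((enc t).take k).count true : ℤ) + 1 := by
        cases b <;> simp [List.count_cons]
      have h2 : ((b :: (!b) :: (enc t).take k).count false : ℤ)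
          = (((enc t).take k).count false : ℤ) + 1 := by
        cases b <;> simp [List.count_cons]
      rw [h1, h2]
      have := ih k hk'
      omega

lemma hammingD_enc : ∀ (l1 l2 : List Bool), l1.length = l2.length →
    hammingD (enc l1) (enc l2) = 2 * hammingD l1 l2 := by
  intro l1
  induction l1 with
  | nil =>
    intro l2 h
    have : l2 = [] := List.length_eq_zero_iff.mp h.symm
    subst this; rfl
  | cons b t ih =>
    intro l2 h
    match l2 with
    | [] => simp at h
    | c :: s =>
      have hl : t.length = s.length := by simpa using h
      have hih := ih s hl
      unfold hammingD at hih ⊢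
      show List.countP (fun p => decide (p.1 ≠ p.2))
          ((b :: (!b) :: enc t).zip (c :: (!c) :: enc s))
        = 2 * List.countP (fun p => decide (p.1 ≠ p.2)) ((b :: t).zip (c :: s))
      rw [List.zip_cons_cons, List.zip_cons_cons, List.zip_cons_cons,
        List.countP_cons, List.countP_cons, List.countP_cons, hih]
      cases b <;> cases c <;> simp <;> omega

lemma hammingD_ofFn : ∀ {n : ℕ} (x y : Fin n → Bool),
    hammingD (List.ofFn x) (List.ofFn y) = hdist x y := by
  intro n
  induction n with
  | zero => intro x y; simp [hammingD, hdist]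
  | succ m ih =>
    intro x y
    have hsum : hdist x y
        = (if x 0 ≠ y 0 then 1 else 0)
          + hdist (fun i => x (Fin.succ i)) (fun i => y (Fin.succ i)) := by
      unfold hdist
      rw [Finset.card_filter, Finset.card_filter, Fin.sum_univ_succ]
    rw [List.ofFn_succ, List.ofFn_succ, hsum,
      ← ih (fun i => x (Fin.succ i)) (fun i => y (Fin.succ i))]
    unfold hammingD
    rw [List.zip_cons_cons, List.countP_cons]
    by_cases h : x 0 = y 0
    · simp [h]
    · simp [h]; omega

lemma enc_injective : Function.Injective enc := by
  intro l1
  induction l1 with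
  | nil =>
    intro l2 h
    cases l2 with
    | nil => rfl
    | cons c s => simp [enc] at h
  | cons b t ih =>
    intro l2 h
    cases l2 with
    | nil => simp [enc] at h
    | cons c s =>
      simp only [enc, List.cons.injEq] at h
      obtain ⟨h1, _, h3⟩ := h
      rw [h1, ih h3]

/-- there exists a 1-BRDS set of binary words of length `2n` with
pairwise Hamming distance at least `2d` of size at least
`2^n / (∑_{j=0}^{d-1} C(n,j))`. -/
theorem stmt1 (n d : ℕ) (hn : 1 ≤ n) (hd : 1 ≤ d) (hdn : d ≤ n) :
    ∃ C : Finset (List Bool), (∀ w ∈ C, w.length = 2 * n) ∧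
      (∀ w ∈ C, brds 1 w) ∧
      (∀ x ∈ C, ∀ y ∈ C, x ≠ y → 2 * d ≤ hammingD x y) ∧
      (2 ^ n : ℝ) / (∑ j ∈ Finset.range d, (n.choose j : ℝ)) ≤ (C.card : ℝ) := by
  classical
  obtain ⟨C0, hdistC, hsize⟩ := gv n d hd
  have hinj : Function.Injective (fun f : Fin n → Bool => enc (List.ofFn f)) :=
    fun f g h => List.ofFn_injective (enc_injective h)
  refine ⟨C0.image (fun f => enc (List.ofFn f)), ?_, ?_, ?_, ?_⟩
  · intro w hw
    obtain ⟨f, _, rfl⟩ := Finset.mem_image.mp hw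
    rw [enc_length]; simp
  · intro w hw
    obtain ⟨f, _, rfl⟩ := Finset.mem_image.mp hw
    exact fun k hk => brds_enc _ k hk
  · intro x hx y hy hxy
    obtain ⟨f, hf, rfl⟩ := Finset.mem_image.mp hx
    obtain ⟨g, hg, rfl⟩ := Finset.mem_image.mp hy
    have hfg : f ≠ g := fun h => hxy (by rw [h])
    rw [hammingD_enc _ _ (by simp), hammingD_ofFn]
    exact Nat.mul_le_mul_left 2 (hdistC f hf g hg hfg)
  · rw [Finset.card_image_of_injective _ hinj]
    have hV : 0 < ∑ j ∈ Finset.range d, n.choose j := by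
      have h0 : 0 ∈ Finset.range d := Finset.mem_range.mpr hd
      calc 0 < n.choose 0 := by simp
        _ ≤ _ := Finset.single_le_sum (fun j _ => Nat.zero_le _) h0
    have hVr : (0 : ℝ) < ∑ j ∈ Finset.range d, (n.choose j : ℝ) := by
      rw [← Nat.cast_sum]; exact_mod_cast hV
    rw [div_le_iff₀ hVr]
    calc (2 : ℝ) ^ n = ((2 ^ n : ℕ) : ℝ) := by push_cast; ring
      _ ≤ ((C0.card * ∑ j ∈ Finset.range d, n.choose j : ℕ) : ℝ) := by exact_mod_cast hsize
      _ = _ := by push_cast; ring
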